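/- The operator T defined by (Tf)(x) = x·f({1/x}) on L^p((0,1), m), where m is the Gauss measure dm = dx/((1+x)log 2), satisfies ∫₀¹ |Tⁿf(x)|^p dm(x) ≤ g^{(n-1)p} ∫₀¹ |f(x)|^p dm(x) for all n ≥ 1, where g = (√5 - 1)/2. -/

import Mathlib

open Real MeasureTheory
open scoped ENNReal
set_option maxHeartbeats 1000000

/-- The Gauss measure `dm = dx / ((1+x) log 2)` on `(0,1)`. -/
noncomputable def gaussMeasure : Measure ℝ :=
  (volume.restrict (Set.Ioo (0 : ℝ) 1)).withDensity
    (fun x => ENNReal.ofReal (1 / ((1 + x) * Real.log 2)))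

/-- The transfer-type operator `(Tf)(x) = x · f({1/x})`. -/
noncomputable def Tgauss (f : ℝ → ℝ) : ℝ → ℝ := fun x => x * f (Int.fract (1 / x))

noncomputable def gmap : ℝ → ℝ := fun x => Int.fract (1 / x)

lemma gmap_measurable : Measurable gmap :=
  measurable_fract.comp (measurable_const.div measurable_id)

lemma gmap_mem {x : ℝ} (h1 : x ∈ Set.Ioo (0:ℝ) 1) (h2 : Irrational x) :
    gmap x ∈ Set.Ioo (0:ℝ) 1 ∧ Irrational (gmap x) := by
  obtain ⟨hx0, hx1⟩ := h1
  have hinv : Irrational (1 / x) := by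
    rw [one_div]; exact h2.inv
  have hfr : Irrational (gmap x) := by
    have : gmap x = 1 / x - (⌊(1:ℝ)/x⌋ : ℤ) := rfl
    rw [this]; exact hinv.sub_intCast _
  refine ⟨⟨?_, Int.fract_lt_one _⟩, hfr⟩
  rcases lt_or_eq_of_le (Int.fract_nonneg (1/x)) with h | h
  · exact h
  · exfalso
    exact hfr.ne_int 0 (by rw [show gmap x = Int.fract (1/x) from rfl, ← h]; simp)

lemma gmap_iter_mem {x : ℝ} (h1 : x ∈ Set.Ioo (0:ℝ) 1) (h2 : Irrational x) (n : ℕ) :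
    gmap^[n] x ∈ Set.Ioo (0:ℝ) 1 ∧ Irrational (gmap^[n] x) := by
  induction n with
  | zero => exact ⟨h1, h2⟩
  | succ n ih =>
    rw [Function.iterate_succ_apply']
    exact gmap_mem ih.1 ih.2

lemma floor_inv_ge_one {x : ℝ} (hx : x ∈ Set.Ioo (0:ℝ) 1) : (1:ℤ) ≤ ⌊1/x⌋ := by
  rw [Int.le_floor]
  push_cast
  rw [le_div_iff₀ hx.1]
  linarith [hx.2]

lemma phi_sq : ((1 + Real.sqrt 5)/2) ^ (2:ℝ) = (1 + Real.sqrt 5)/2 + 1 := by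
  have h5 : Real.sqrt 5 ^ 2 = 5 := Real.sq_sqrt (by norm_num)
  have hpos : (0:ℝ) ≤ (1 + Real.sqrt 5)/2 := by positivity
  rw [show (2:ℝ) = ((2:ℕ):ℝ) by norm_num, Real.rpow_natCast]
  nlinarith [h5]

lemma one_le_phi : (1:ℝ) ≤ (1 + Real.sqrt 5)/2 := by
  have : (1:ℝ) ≤ Real.sqrt 5 := by
    rw [show (1:ℝ) = Real.sqrt 1 by simp]
    exact Real.sqrt_le_sqrt (by norm_num)
  linarith

lemma gauss_key {x : ℝ} (h1 : x ∈ Set.Ioo (0:ℝ) 1) (h2 : Irrational x) :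
    ∀ n : ℕ, 1 ≤ n → ∃ A B : ℝ,
      ((1 + Real.sqrt 5)/2) ^ ((n:ℝ) - 1) ≤ A ∧ ((1 + Real.sqrt 5)/2) ^ ((n:ℝ) - 2) ≤ B ∧
      (∏ k ∈ Finset.range n, gmap^[k] x) * (A + B * gmap^[n] x) = 1 := by
  set φ : ℝ := (1 + Real.sqrt 5)/2 with hφ
  have hφ1 : (1:ℝ) ≤ φ := one_le_phi
  have hφ0 : (0:ℝ) < φ := lt_of_lt_of_le one_pos hφ1
  intro n hn
  induction n, hn using Nat.le_induction with
  | base =>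
    refine ⟨(⌊1/x⌋ : ℤ), 1, ?_, ?_, ?_⟩
    · simpa using (by exact_mod_cast floor_inv_ge_one h1 : (1:ℝ) ≤ (⌊1/x⌋ : ℤ))
    · norm_num
      exact Real.rpow_le_one_of_one_le_of_nonpos hφ1 (by norm_num)
    · have hx0 : x ≠ 0 := ne_of_gt h1.1
      have : ((⌊1/x⌋ : ℤ) : ℝ) + gmap^[1] x = 1/x := by
        simp only [Function.iterate_one, gmap]
        rw [Int.fract]; ring
      simp only [Finset.prod_range_one, Function.iterate_zero_apply, one_mul]
      rw [this, mul_one_div_cancel hx0]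
  | succ n hn ih =>
    obtain ⟨A, B, hA, hB, heq⟩ := ih
    set y := gmap^[n] x with hy
    obtain ⟨hyIoo, hyIrr⟩ := gmap_iter_mem h1 h2 n
    have hy0 : (y:ℝ) ≠ 0 := ne_of_gt hyIoo.1
    have ha1 : (1:ℝ) ≤ (⌊1/y⌋ : ℤ) := by exact_mod_cast floor_inv_ge_one hyIoo
    set a : ℝ := ((⌊1/y⌋ : ℤ) : ℝ) with hadef
    have hz : gmap^[n+1] x = gmap y := by rw [Function.iterate_succ_apply']
    set z := gmap y with hzdef
    have hyz : y * (a + z) = 1 := by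
      have : a + z = 1/y := by
        simp only [hzdef, gmap, hadef, Int.fract]; ring
      rw [this, mul_one_div_cancel hy0]
    have hApos : (0:ℝ) < A := lt_of_lt_of_le (Real.rpow_pos_of_pos hφ0 _) hA
    have hBpos : (0:ℝ) < B := lt_of_lt_of_le (Real.rpow_pos_of_pos hφ0 _) hB
    refine ⟨A * a + B, A, ?_, ?_, ?_⟩
    · have key : φ ^ ((n:ℝ) - 1) + φ ^ ((n:ℝ) - 2) = φ ^ (((n:ℕ):ℝ) + 1 - 1) := by
        have e1 : ((n:ℝ) + 1 - 1) = ((n:ℝ) - 2) + 2 := by ring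
        have e2 : ((n:ℝ) - 1) = ((n:ℝ) - 2) + 1 := by ring
        rw [e1, e2, Real.rpow_add hφ0, Real.rpow_add hφ0, Real.rpow_one, phi_sq]
        ring
      push_cast
      push_cast at key
      rw [← key]
      have : A * 1 ≤ A * a := by
        apply mul_le_mul_of_nonneg_left ha1 (le_of_lt hApos)
      nlinarith
    · push_cast
      rw [show ((n:ℝ) + 1 - 2) = (n:ℝ) - 1 by ring]
      exact hA
    · rw [Finset.prod_range_succ, hz, ← hy]
      set P := ∏ k ∈ Finset.range n, gmap^[k] x with hP
      linear_combination heq + P * A * hyz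

lemma gauss_prod_bound {x : ℝ} (h1 : x ∈ Set.Ioo (0:ℝ) 1) (h2 : Irrational x)
    (n : ℕ) (hn : 1 ≤ n) :
    0 ≤ (∏ k ∈ Finset.range n, gmap^[k] x) ∧
    (∏ k ∈ Finset.range n, gmap^[k] x) ≤ ((Real.sqrt 5 - 1)/2) ^ ((n:ℝ) - 1) := by
  set φ : ℝ := (1 + Real.sqrt 5)/2 with hφ
  have hφ1 : (1:ℝ) ≤ φ := one_le_phi
  have hφ0 : (0:ℝ) < φ := lt_of_lt_of_le one_pos hφ1
  have hg : (Real.sqrt 5 - 1)/2 = φ⁻¹ := by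
    have h5 : Real.sqrt 5 ^ 2 = 5 := Real.sq_sqrt (by norm_num)
    apply eq_inv_of_mul_eq_one_left
    nlinarith
  constructor
  · apply Finset.prod_nonneg
    intro k _
    exact le_of_lt (gmap_iter_mem h1 h2 k).1.1
  · obtain ⟨A, B, hA, hB, heq⟩ := gauss_key h1 h2 n hn
    have hApos : (0:ℝ) < A := lt_of_lt_of_le (Real.rpow_pos_of_pos hφ0 _) hA
    have hBpos : (0:ℝ) < B := lt_of_lt_of_le (Real.rpow_pos_of_pos hφ0 _) hB
    have hy0 : (0:ℝ) ≤ gmap^[n] x := le_of_lt (gmap_iter_mem h1 h2 n).1.1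
    have hS : (0:ℝ) < A + B * gmap^[n] x := by positivity
    have hP : (∏ k ∈ Finset.range n, gmap^[k] x) = (A + B * gmap^[n] x)⁻¹ := by
      field_simp
      linarith [heq]
    rw [hP, hg, Real.inv_rpow (le_of_lt hφ0), ← Real.rpow_neg (le_of_lt hφ0)]
    rw [Real.rpow_neg (le_of_lt hφ0)]
    apply inv_anti₀ (Real.rpow_pos_of_pos hφ0 _)
    calc φ ^ ((n:ℝ) - 1) ≤ A := hA
    _ ≤ A + B * gmap^[n] x := by nlinarith

lemma gauss_density_measurable :
    Measurable fun x : ℝ => ENNReal.ofReal (1 / ((1 + x) * Real.log 2)) := by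
  fun_prop

lemma lintegral_image_eq_lintegral_abs_deriv_mul' {s : Set ℝ} {f f' : ℝ → ℝ}
    (hs : MeasurableSet s) (hf' : ∀ x ∈ s, HasDerivWithinAt f (f' x) s x)
    (hf : Set.InjOn f s) (g : ℝ → ℝ≥0∞) :
    ∫⁻ x in f '' s, g x = ∫⁻ x in s, ENNReal.ofReal |f' x| * g (f x) := by
  simpa only [ContinuousLinearMap.det_toSpanSingleton] using
    lintegral_image_eq_lintegral_abs_det_fderiv_mul volume hs
      (fun x hx => (hf' x hx).hasFDerivWithinAt) hf g

lemma image_aux (c : ℝ) (hc : 1 ≤ c) :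
    (fun x : ℝ => x⁻¹ - c) '' Set.Ioo (1/(c+1)) (1/c) = Set.Ioo (0:ℝ) 1 := by
  have hc0 : (0:ℝ) < c := lt_of_lt_of_le one_pos hc
  have hc10 : (0:ℝ) < c + 1 := by linarith
  ext y
  constructor
  · rintro ⟨x, ⟨hx1, hx2⟩, rfl⟩
    have hx0 : 0 < x := lt_trans (by positivity) hx1
    have h1 : c < x⁻¹ := by
      rw [← one_div, lt_div_iff₀ hx0]
      have := (lt_div_iff₀ hc0).mp hx2
      linarith
    have h2 : x⁻¹ < c + 1 := by
      rw [← one_div, div_lt_iff₀ hx0]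
      have := (div_lt_iff₀ hc10).mp hx1
      linarith
    exact ⟨by linarith, by linarith⟩
  · rintro ⟨hy0, hy1⟩
    have hyc : (0:ℝ) < y + c := by linarith
    refine ⟨(y+c)⁻¹, ⟨?_, ?_⟩, by show ((y+c)⁻¹)⁻¹ - c = y; rw [inv_inv]; ring⟩
    · rw [← one_div]
      exact one_div_lt_one_div_of_lt hyc (by linarith)
    · rw [← one_div]
      exact one_div_lt_one_div_of_lt hc0 (by linarith)

lemma gauss_piece (g : ℝ → ℝ≥0∞) (k : ℕ) :
    ∫⁻ x in Set.Ioo (1/((k:ℝ)+2)) (1/((k:ℝ)+1)),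
        ENNReal.ofReal (1 / ((1 + x) * Real.log 2)) * g (Int.fract (1/x))
      = ∫⁻ y in Set.Ioo (0:ℝ) 1,
          g y * ENNReal.ofReal (1 / (((y+(k:ℝ)+1) * (y+(k:ℝ)+2)) * Real.log 2)) := by
  have hL : (0:ℝ) < Real.log 2 := Real.log_pos (by norm_num)
  have hk0 : (0:ℝ) ≤ (k:ℝ) := Nat.cast_nonneg k
  have hc : (1:ℝ) ≤ (k:ℝ)+1 := by linarith
  have hc0 : (0:ℝ) < (k:ℝ)+1 := by linarith
  have hc10 : (0:ℝ) < (k:ℝ)+1+1 := by linarith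
  have hs : MeasurableSet (Set.Ioo (1/((k:ℝ)+1+1)) (1/((k:ℝ)+1))) := measurableSet_Ioo
  have hderiv : ∀ x ∈ Set.Ioo (1/((k:ℝ)+1+1)) (1/((k:ℝ)+1)),
      HasDerivWithinAt (fun x : ℝ => x⁻¹ - ((k:ℝ)+1)) (-(x^2)⁻¹)
        (Set.Ioo (1/((k:ℝ)+1+1)) (1/((k:ℝ)+1))) x := by
    intro x hx
    have hx0 : x ≠ 0 := ne_of_gt (lt_trans (by positivity) hx.1)
    exact ((hasDerivAt_inv hx0).sub_const _).hasDerivWithinAt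
  have hinj : Set.InjOn (fun x : ℝ => x⁻¹ - ((k:ℝ)+1))
      (Set.Ioo (1/((k:ℝ)+1+1)) (1/((k:ℝ)+1))) := by
    intro a _ b _ h
    exact inv_injective (by simpa [sub_left_inj] using h)
  have himg : (fun x : ℝ => x⁻¹ - ((k:ℝ)+1)) '' Set.Ioo (1/((k:ℝ)+1+1)) (1/((k:ℝ)+1))
      = Set.Ioo (0:ℝ) 1 := image_aux ((k:ℝ)+1) hc
  have key := lintegral_image_eq_lintegral_abs_deriv_mul' hs hderiv hinj
    (fun y => g y * ENNReal.ofReal (1 / (((y+(k:ℝ)+1) * (y+(k:ℝ)+2)) * Real.log 2)))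
  rw [himg] at key
  rw [show (1:ℝ)/((k:ℝ)+2) = 1/((k:ℝ)+1+1) by ring_nf]
  rw [key]
  apply setLIntegral_congr_fun_ae hs
  apply Filter.Eventually.of_forall
  intro x hx
  have hx0 : (0:ℝ) < x := lt_trans (by positivity) hx.1
  have h1 : (k:ℝ)+1 < x⁻¹ := by
    rw [← one_div, lt_div_iff₀ hx0]
    have := (lt_div_iff₀ hc0).mp hx.2
    linarith
  have h2 : x⁻¹ < (k:ℝ)+1+1 := by
    rw [← one_div, div_lt_iff₀ hx0]
    have := (div_lt_iff₀ hc10).mp hx.1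
    linarith
  have hfloor : ⌊(1:ℝ)/x⌋ = (k:ℤ) + 1 := by
    rw [Int.floor_eq_iff]
    constructor
    · push_cast; rw [one_div]; exact le_of_lt h1
    · push_cast; rw [one_div]; linarith
  have hfract : Int.fract (1/x) = x⁻¹ - ((k:ℝ)+1) := by
    rw [Int.fract, hfloor]
    push_cast
    rw [one_div]
  rw [hfract]
  have habs : |(-(x^2)⁻¹ : ℝ)| = (x^2)⁻¹ := by
    rw [abs_neg, abs_of_pos]; positivity
  rw [habs]
  rw [mul_comm (ENNReal.ofReal (1 / ((1 + x) * Real.log 2))) (g (x⁻¹ - ((k:ℝ)+1))),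
    mul_left_comm]
  congr 1
  rw [← ENNReal.ofReal_mul (by positivity)]
  congr 1
  have hx1 : (1:ℝ) + x ≠ 0 := by positivity
  have e1 : x⁻¹ - ((k:ℝ)+1) + (k:ℝ) + 1 = x⁻¹ := by ring
  have e2 : x⁻¹ - ((k:ℝ)+1) + (k:ℝ) + 2 = x⁻¹ + 1 := by ring
  rw [e1, e2]
  rw [eq_comm]
  field_simp

lemma gauss_tsum {y : ℝ} (hy : 0 ≤ y) :
    ∑' k : ℕ, ENNReal.ofReal (1 / (((y+(k:ℝ)+1) * (y+(k:ℝ)+2)) * Real.log 2))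
      = ENNReal.ofReal (1 / ((1 + y) * Real.log 2)) := by
  have hL : (0:ℝ) < Real.log 2 := Real.log_pos (by norm_num)
  have hupos : ∀ k : ℕ, (0:ℝ) ≤ 1 / (((y+(k:ℝ)+1) * (y+(k:ℝ)+2)) * Real.log 2) := by
    intro k; positivity
  have hdiff : ∀ k : ℕ, 1 / (((y+(k:ℝ)+1) * (y+(k:ℝ)+2)) * Real.log 2)
      = 1 / ((y+(k:ℝ)+1) * Real.log 2) - 1 / ((y+((k+1:ℕ):ℝ)+1) * Real.log 2) := by
    intro k
    have h1 : (0:ℝ) < y + (k:ℝ) + 1 := by positivity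
    have h2 : (0:ℝ) < y + (k:ℝ) + 2 := by positivity
    push_cast
    rw [show y + ((k:ℝ)+1) + 1 = y + (k:ℝ) + 2 by ring]
    field_simp
    ring
  have hsum_range : ∀ n : ℕ, ∑ i ∈ Finset.range n,
      (1 / (((y+(i:ℝ)+1) * (y+(i:ℝ)+2)) * Real.log 2))
      = 1 / ((y+(0:ℝ)+1) * Real.log 2) - 1 / ((y+(n:ℝ)+1) * Real.log 2) := by
    intro n
    calc ∑ i ∈ Finset.range n, (1 / (((y+(i:ℝ)+1) * (y+(i:ℝ)+2)) * Real.log 2))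
        = ∑ i ∈ Finset.range n, ((fun j : ℕ => 1 / ((y+(j:ℝ)+1) * Real.log 2)) i
            - (fun j : ℕ => 1 / ((y+(j:ℝ)+1) * Real.log 2)) (i+1)) :=
          Finset.sum_congr rfl fun i _ => hdiff i
    _ = _ := Finset.sum_range_sub' (fun j : ℕ => 1 / ((y+(j:ℝ)+1) * Real.log 2)) n
    _ = 1 / ((y+(0:ℝ)+1) * Real.log 2) - 1 / ((y+(n:ℝ)+1) * Real.log 2) := by norm_num
  have hbn : Filter.Tendsto (fun n : ℕ => 1 / ((y+(n:ℝ)+1) * Real.log 2))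
      Filter.atTop (nhds 0) := by
    have h1 : Filter.Tendsto (fun k : ℕ => ((k:ℝ) + (y+1)) * Real.log 2)
        Filter.atTop Filter.atTop :=
      (Filter.tendsto_atTop_add_const_right _ _ tendsto_natCast_atTop_atTop).atTop_mul_const hL
    have h2 := h1.inv_tendsto_atTop
    have heq : (fun n : ℕ => 1 / ((y+(n:ℝ)+1) * Real.log 2))
        = fun k : ℕ => (((k:ℝ) + (y+1)) * Real.log 2)⁻¹ := by
      funext k; rw [one_div]; ring_nf
    rw [heq]
    exact h2
  have hsum : HasSum (fun k : ℕ => 1 / (((y+(k:ℝ)+1) * (y+(k:ℝ)+2)) * Real.log 2))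
      (1 / ((y+(0:ℝ)+1) * Real.log 2)) := by
    rw [hasSum_iff_tendsto_nat_of_nonneg hupos]
    have h0 : Filter.Tendsto (fun n : ℕ => 1 / ((y+(0:ℝ)+1) * Real.log 2)
        - 1 / ((y+(n:ℝ)+1) * Real.log 2)) Filter.atTop
        (nhds (1 / ((y+(0:ℝ)+1) * Real.log 2))) := by
      simpa using Filter.Tendsto.sub
        (tendsto_const_nhds (x := 1 / ((y+(0:ℝ)+1) * Real.log 2)) (f := Filter.atTop)) hbn
    exact Filter.Tendsto.congr (fun n => (hsum_range n).symm) h0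
  rw [show (1:ℝ) / ((1 + y) * Real.log 2) = 1 / ((y+(0:ℝ)+1) * Real.log 2) by ring_nf]
  rw [← hsum.tsum_eq, ENNReal.ofReal_tsum_of_nonneg hupos hsum.summable]

lemma Ioo_ae_eq_iUnion :
    (Set.Ioo (0:ℝ) 1 : Set ℝ)
      =ᵐ[volume] ⋃ k : ℕ, Set.Ioo (1/((k:ℝ)+2)) (1/((k:ℝ)+1)) := by
  rw [ae_eq_set]
  constructor
  · apply measure_mono_null
      (show Set.Ioo (0:ℝ) 1 \ _ ⊆ Set.range (fun k : ℕ => 1/((k:ℝ)+1)) from ?_)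
    · exact (Set.countable_range _).measure_zero _
    · rintro x ⟨⟨hx0, hx1⟩, hx2⟩
      have hx0' : (0:ℝ) < 1/x := by positivity
      set m : ℤ := ⌊1/x⌋ with hm
      have hm1 : (1:ℤ) ≤ m := by
        rw [hm, Int.le_floor]
        push_cast
        rw [le_div_iff₀ hx0]
        linarith
      have hmr : (1:ℝ) ≤ (m:ℝ) := by exact_mod_cast hm1
      have hfl : (m:ℝ) ≤ 1/x := Int.floor_le _
      have hfu : 1/x < (m:ℝ) + 1 := Int.lt_floor_add_one _
      have hxlow : 1/((m:ℝ)+1) < x := by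
        rw [div_lt_iff₀ (by linarith)]
        calc (1:ℝ) = (1/x) * x := by field_simp
        _ < ((m:ℝ)+1) * x := by
              apply mul_lt_mul_of_pos_right hfu hx0
        _ = x * ((m:ℝ)+1) := by ring
      have hxhigh : x ≤ 1/(m:ℝ) := by
        rw [le_div_iff₀ (by linarith)]
        calc x * (m:ℝ) ≤ x * (1/x) := by
              apply mul_le_mul_of_nonneg_left hfl (le_of_lt hx0) |>.trans_eq ?_
              field_simp
        _ = 1 := by field_simp
      rcases lt_or_eq_of_le hxhigh with hlt | heq
      · exfalso
        apply hx2
        refine Set.mem_iUnion.mpr ⟨(m-1).toNat, ?_⟩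
        have hcast : (((m-1).toNat : ℕ) : ℝ) = (m:ℝ) - 1 := by
          have : ((m-1).toNat : ℤ) = m - 1 := Int.toNat_of_nonneg (by omega)
          have := congrArg (fun z : ℤ => (z : ℝ)) this
          push_cast at this
          linarith
        constructor
        · rw [hcast]; convert hxlow using 2; rfl; ring
        · rw [hcast]; convert hlt using 2; ring
      · refine ⟨(m-1).toNat, ?_⟩
        have hcast : (((m-1).toNat : ℕ) : ℝ) = (m:ℝ) - 1 := by
          have : ((m-1).toNat : ℤ) = m - 1 := Int.toNat_of_nonneg (by omega)
          have := congrArg (fun z : ℤ => (z : ℝ)) this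
          push_cast at this
          linarith
        simp only []
        rw [hcast]
        rw [show (m:ℝ) - 1 + 1 = (m:ℝ) by ring]
        exact heq.symm
  · apply measure_mono_null (show _ ⊆ (∅ : Set ℝ) from ?_)
    · simp
    · rw [Set.diff_eq_empty.mpr]
      intro x hx
      obtain ⟨k, hk1, hk2⟩ := Set.mem_iUnion.mp hx
      refine ⟨lt_trans (by positivity) hk1, lt_of_lt_of_le hk2 ?_⟩
      rw [div_le_one (by positivity)]
      push_cast
      linarith [Nat.cast_nonneg (α := ℝ) k]

lemma gauss_lintegral_comp (g : ℝ → ℝ≥0∞) (hg : Measurable g) :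
    ∫⁻ x, g (Int.fract (1/x)) ∂gaussMeasure = ∫⁻ x, g x ∂gaussMeasure := by
  have hgm : Measurable fun x : ℝ => g (Int.fract (1/x)) := hg.comp gmap_measurable
  rw [gaussMeasure, lintegral_withDensity_eq_lintegral_mul _ gauss_density_measurable hgm,
    lintegral_withDensity_eq_lintegral_mul _ gauss_density_measurable hg]
  simp only [Pi.mul_apply]
  have hmeasI : ∀ k : ℕ, MeasurableSet (Set.Ioo (1/((k:ℝ)+2)) (1/((k:ℝ)+1))) :=
    fun k => measurableSet_Ioo
  have hdisj : Pairwise (Function.onFun Disjoint fun k : ℕ =>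
      Set.Ioo (1/((k:ℝ)+2)) (1/((k:ℝ)+1))) := by
    intro i j hij
    wlog h : i < j generalizing i j
    · exact (this hij.symm (by omega)).symm
    · apply Set.disjoint_left.mpr
      rintro x ⟨hxi1, hxi2⟩ ⟨hxj1, hxj2⟩
      have hij1 : (i:ℝ)+2 ≤ (j:ℝ)+1 := by
        have : (i:ℝ) + 1 ≤ (j:ℝ) := by exact_mod_cast h
        linarith
      have h2 : 1/((j:ℝ)+1) ≤ 1/((i:ℝ)+2) :=
        one_div_le_one_div_of_le (by positivity) hij1
      linarith
  have hFkmeas : ∀ k : ℕ, Measurable fun y : ℝ =>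
      g y * ENNReal.ofReal (1 / (((y+(k:ℝ)+1) * (y+(k:ℝ)+2)) * Real.log 2)) := by
    intro k
    exact hg.mul (by fun_prop)
  calc ∫⁻ a in Set.Ioo (0:ℝ) 1,
        ENNReal.ofReal (1 / ((1 + a) * Real.log 2)) * g (Int.fract (1/a)) ∂volume
      = ∫⁻ a in ⋃ k : ℕ, Set.Ioo (1/((k:ℝ)+2)) (1/((k:ℝ)+1)),
          ENNReal.ofReal (1 / ((1 + a) * Real.log 2)) * g (Int.fract (1/a)) ∂volume :=
        setLIntegral_congr Ioo_ae_eq_iUnion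
    _ = ∑' k : ℕ, ∫⁻ a in Set.Ioo (1/((k:ℝ)+2)) (1/((k:ℝ)+1)),
          ENNReal.ofReal (1 / ((1 + a) * Real.log 2)) * g (Int.fract (1/a)) ∂volume :=
        lintegral_iUnion hmeasI hdisj _
    _ = ∑' k : ℕ, ∫⁻ y in Set.Ioo (0:ℝ) 1,
          g y * ENNReal.ofReal (1 / (((y+(k:ℝ)+1) * (y+(k:ℝ)+2)) * Real.log 2)) ∂volume :=
        tsum_congr fun k => gauss_piece g k
    _ = ∫⁻ y in Set.Ioo (0:ℝ) 1, ∑' k : ℕ,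
          g y * ENNReal.ofReal (1 / (((y+(k:ℝ)+1) * (y+(k:ℝ)+2)) * Real.log 2)) ∂volume :=
        (lintegral_tsum fun k => (hFkmeas k).aemeasurable).symm
    _ = ∫⁻ y in Set.Ioo (0:ℝ) 1,
          ENNReal.ofReal (1 / ((1 + y) * Real.log 2)) * g y ∂volume := by
        apply setLIntegral_congr_fun_ae measurableSet_Ioo
        apply Filter.Eventually.of_forall
        intro y hy
        rw [ENNReal.tsum_mul_left, gauss_tsum (le_of_lt hy.1), mul_comm]

lemma gauss_measurePreserving :
    MeasurePreserving (fun x : ℝ => Int.fract (1/x)) gaussMeasure gaussMeasure := by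
  refine ⟨gmap_measurable, ?_⟩
  apply Measure.ext
  intro s hs
  rw [Measure.map_apply (show Measurable fun x : ℝ => Int.fract (1/x) from gmap_measurable) hs]
  have h1 : gaussMeasure ((fun x : ℝ => Int.fract (1/x)) ⁻¹' s)
      = ∫⁻ x, s.indicator (1 : ℝ → ℝ≥0∞) (Int.fract (1/x)) ∂gaussMeasure := by
    rw [← lintegral_indicator_one
      (show MeasurableSet ((fun x : ℝ => Int.fract (1/x)) ⁻¹' s) from gmap_measurable hs)]
    congr 1
  rw [h1, gauss_lintegral_comp (s.indicator 1) (measurable_one.indicator hs),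
    lintegral_indicator_one hs]

lemma gauss_ac : gaussMeasure ≪ (volume : Measure ℝ) :=
  (withDensity_absolutelyContinuous _ _).trans
    (Measure.absolutelyContinuous_of_le Measure.restrict_le_self)

lemma gauss_ae_Ioo : ∀ᵐ x ∂gaussMeasure, x ∈ Set.Ioo (0:ℝ) 1 := by
  rw [ae_iff]
  have hs : MeasurableSet (Set.Ioo (0:ℝ) 1) := measurableSet_Ioo
  have hset : {a : ℝ | ¬ a ∈ Set.Ioo (0:ℝ) 1} = (Set.Ioo (0:ℝ) 1)ᶜ := rfl
  rw [hset, gaussMeasure, withDensity_apply _ hs.compl,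
    Measure.restrict_restrict hs.compl, Set.compl_inter_self, Measure.restrict_empty,
    lintegral_zero_measure]

lemma gauss_ae_irrational : ∀ᵐ x ∂gaussMeasure, Irrational x := by
  rw [ae_iff]
  apply gauss_ac
  apply measure_mono_null (show {a : ℝ | ¬ Irrational a} ⊆ Set.range ((↑) : ℚ → ℝ) from ?_)
  · exact (Set.countable_range _).measure_zero _
  · intro x hx
    simpa [Irrational] using hx

lemma Tgauss_iter_formula (F : ℝ → ℝ) (n : ℕ) (x : ℝ) :
    Tgauss^[n] F x = (∏ k ∈ Finset.range n, gmap^[k] x) * F (gmap^[n] x) := by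
  induction n generalizing x with
  | zero => simp
  | succ n ih =>
    rw [Function.iterate_succ_apply']
    show x * Tgauss^[n] F (Int.fract (1/x)) = _
    have hgm : Int.fract (1/x) = gmap x := rfl
    rw [hgm, ih (gmap x)]
    have h1 : ∀ k, gmap^[k] (gmap x) = gmap^[k+1] x :=
      fun k => (Function.iterate_succ_apply gmap k x).symm
    simp_rw [h1]
    rw [Finset.prod_range_succ']
    simp only [Function.iterate_zero_apply]
    ring

lemma Tgauss_iter_measurable {F : ℝ → ℝ} (hF : Measurable F) (n : ℕ) :
    Measurable (Tgauss^[n] F) := by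
  induction n with
  | zero => simpa using hF
  | succ j ih =>
    rw [Function.iterate_succ_apply']
    exact measurable_id.mul (ih.comp gmap_measurable)

/-- For `f ∈ L^p(m)` with `m` the Gauss measure, the iterates of `T` satisfy
`∫ |Tⁿ f|^p dm ≤ g^{(n-1)p} ∫ |f|^p dm`, where `g = (√5 - 1)/2`. -/
theorem iterate_Top_norm_bound (p : ℝ) (hp : 1 ≤ p) (f : ℝ → ℝ)
    (hf : MemLp f (ENNReal.ofReal p) gaussMeasure) (n : ℕ) (hn : 1 ≤ n) :
    ∫ x, |Tgauss^[n] f x| ^ p ∂gaussMeasure ≤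
      ((Real.sqrt 5 - 1) / 2) ^ (((n : ℝ) - 1) * p) * ∫ x, |f x| ^ p ∂gaussMeasure := by
  have hp0 : (0:ℝ) ≤ p := le_trans zero_le_one hp
  have hs5 : (1:ℝ) ≤ Real.sqrt 5 := by
    rw [show (1:ℝ) = Real.sqrt 1 by simp]
    exact Real.sqrt_le_sqrt (by norm_num)
  have hg0 : (0:ℝ) ≤ (Real.sqrt 5 - 1)/2 := by linarith
  have hC0 : (0:ℝ) ≤ ((Real.sqrt 5 - 1)/2) ^ (((n:ℝ)-1)*p) := Real.rpow_nonneg hg0 _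
  have hgPn : MeasurePreserving (gmap^[n]) gaussMeasure gaussMeasure :=
    gauss_measurePreserving.iterate n
  obtain ⟨F, hFmeas, hfF⟩ : ∃ F : ℝ → ℝ, Measurable F ∧ f =ᵐ[gaussMeasure] F := by
    have h := hf.1
    exact ⟨h.mk f, h.stronglyMeasurable_mk.measurable, h.ae_eq_mk⟩
  -- a.e. equality of the LHS integrands
  have haeTn : (fun x => |Tgauss^[n] f x| ^ p)
      =ᵐ[gaussMeasure] fun x => |Tgauss^[n] F x| ^ p := by
    have hcomp : (f ∘ gmap^[n]) =ᵐ[gaussMeasure] (F ∘ gmap^[n]) :=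
      hgPn.quasiMeasurePreserving.ae_eq hfF
    filter_upwards [hcomp] with x hx
    rw [Tgauss_iter_formula, Tgauss_iter_formula]
    simp only [Function.comp_apply] at hx
    rw [hx]
  have haeF : (fun x => |f x| ^ p) =ᵐ[gaussMeasure] fun x => |F x| ^ p := by
    filter_upwards [hfF] with x hx
    rw [hx]
  rw [integral_congr_ae haeTn, integral_congr_ae haeF]
  -- convert both sides to lintegrals
  have hTnmeas : Measurable fun x => |Tgauss^[n] F x| ^ p :=
    (Tgauss_iter_measurable hFmeas n).abs.pow measurable_const
  have hFpmeas : Measurable fun x => |F x| ^ p := hFmeas.abs.pow measurable_const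
  rw [integral_eq_lintegral_of_nonneg_ae
      (Filter.Eventually.of_forall fun x => Real.rpow_nonneg (abs_nonneg _) p)
      hTnmeas.aestronglyMeasurable,
    integral_eq_lintegral_of_nonneg_ae
      (Filter.Eventually.of_forall fun x => Real.rpow_nonneg (abs_nonneg _) p)
      hFpmeas.aestronglyMeasurable]
  -- pointwise a.e. bound
  have hptwise : ∀ᵐ x ∂gaussMeasure,
      ENNReal.ofReal (|Tgauss^[n] F x| ^ p)
        ≤ ENNReal.ofReal (((Real.sqrt 5 - 1)/2) ^ (((n:ℝ)-1)*p))
            * ENNReal.ofReal (|F (gmap^[n] x)| ^ p) := by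
    filter_upwards [gauss_ae_Ioo, gauss_ae_irrational] with x hx1 hx2
    obtain ⟨hP0, hPle⟩ := gauss_prod_bound hx1 hx2 n hn
    rw [Tgauss_iter_formula]
    rw [abs_mul, abs_of_nonneg hP0, Real.mul_rpow hP0 (abs_nonneg _)]
    rw [← ENNReal.ofReal_mul hC0]
    apply ENNReal.ofReal_le_ofReal
    apply mul_le_mul_of_nonneg_right _ (Real.rpow_nonneg (abs_nonneg _) p)
    calc (∏ k ∈ Finset.range n, gmap^[k] x) ^ p
        ≤ (((Real.sqrt 5 - 1)/2) ^ ((n:ℝ)-1)) ^ p := Real.rpow_le_rpow hP0 hPle hp0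
      _ = ((Real.sqrt 5 - 1)/2) ^ (((n:ℝ)-1)*p) := (Real.rpow_mul hg0 _ _).symm
  -- lintegral inequality
  have hFcompmeas : Measurable fun x => ENNReal.ofReal (|F (gmap^[n] x)| ^ p) :=
    (hFpmeas.comp (gmap_measurable.iterate n)).ennreal_ofReal
  have hlint : ∫⁻ x, ENNReal.ofReal (|Tgauss^[n] F x| ^ p) ∂gaussMeasure
      ≤ ENNReal.ofReal (((Real.sqrt 5 - 1)/2) ^ (((n:ℝ)-1)*p))
          * ∫⁻ x, ENNReal.ofReal (|F x| ^ p) ∂gaussMeasure := by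
    calc ∫⁻ x, ENNReal.ofReal (|Tgauss^[n] F x| ^ p) ∂gaussMeasure
        ≤ ∫⁻ x, ENNReal.ofReal (((Real.sqrt 5 - 1)/2) ^ (((n:ℝ)-1)*p))
            * ENNReal.ofReal (|F (gmap^[n] x)| ^ p) ∂gaussMeasure :=
          lintegral_mono_ae hptwise
      _ = ENNReal.ofReal (((Real.sqrt 5 - 1)/2) ^ (((n:ℝ)-1)*p))
            * ∫⁻ x, ENNReal.ofReal (|F (gmap^[n] x)| ^ p) ∂gaussMeasure :=
          lintegral_const_mul _ hFcompmeas
      _ = _ := by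
          congr 1
          exact hgPn.lintegral_comp hFpmeas.ennreal_ofReal
  -- finiteness of the RHS lintegral
  have hfin : ∫⁻ x, ENNReal.ofReal (|F x| ^ p) ∂gaussMeasure < ⊤ := by
    have hint : Integrable (fun x => |f x| ^ p) gaussMeasure := by
      have := hf.integrable_norm_rpow (by simp [ENNReal.ofReal_eq_zero]; linarith)
        ENNReal.ofReal_ne_top
      rwa [ENNReal.toReal_ofReal hp0] at this
      -- norm vs abs
    have hint2 : Integrable (fun x => |F x| ^ p) gaussMeasure := hint.congr haeF
    exact hint2.lintegral_lt_top
  have hne : ENNReal.ofReal (((Real.sqrt 5 - 1)/2) ^ (((n:ℝ)-1)*p))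
      * ∫⁻ x, ENNReal.ofReal (|F x| ^ p) ∂gaussMeasure ≠ ⊤ :=
    ENNReal.mul_ne_top ENNReal.ofReal_ne_top hfin.ne
  calc (∫⁻ x, ENNReal.ofReal (|Tgauss^[n] F x| ^ p) ∂gaussMeasure).toReal
      ≤ (ENNReal.ofReal (((Real.sqrt 5 - 1)/2) ^ (((n:ℝ)-1)*p))
          * ∫⁻ x, ENNReal.ofReal (|F x| ^ p) ∂gaussMeasure).toReal :=
        ENNReal.toReal_mono hne hlint
    _ = ((Real.sqrt 5 - 1)/2) ^ (((n:ℝ)-1)*p)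
          * (∫⁻ x, ENNReal.ofReal (|F x| ^ p) ∂gaussMeasure).toReal := by
        rw [ENNReal.toReal_mul, ENNReal.toReal_ofReal hC0]
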